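/- Let c₁, c₂, c₃, k be positive real numbers, and let x, y, z be real numbers with 0 < x ≤ c₁, 0 < y ≤ c₂, 0 < z ≤ c₃, and xyz = k. Then x + y + z ≤ max{ c_i + c_j + k/(c_i·c_j) : 1 ≤ i < j ≤ 3 }, i.e. x + y + z ≤ max( c₁ + c₂ + k/(c₁c₂), c₁ + c₃ + k/(c₁c₃), c₂ + c₃ + k/(c₂c₃) ). -/

import Mathlib

lemma aux_convex (P a b t : ℝ) (hP : 0 < P) (ha : 0 < a) (hab : a ≤ t) (htb : t ≤ b) :
    t + P / t ≤ max (a + P / a) (b + P / b) := by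
  have ht : 0 < t := ha.trans_le hab
  have hb : 0 < b := ht.trans_le htb
  rcases le_or_gt (t * a) P with h | h
  · refine le_max_of_le_left ?_
    have h2 : a + P / a - (t + P / t) = (t - a) * (P - t * a) / (t * a) := by
      field_simp; ring
    have h3 : 0 ≤ (t - a) * (P - t * a) / (t * a) :=
      div_nonneg (mul_nonneg (by linarith) (by linarith)) (le_of_lt (mul_pos ht ha))
    linarith
  · refine le_max_of_le_right ?_
    have hab' : a ≤ b := hab.trans htb
    have hPb : P ≤ t * b := le_of_lt (h.trans_le (by nlinarith))
    have h2 : b + P / b - (t + P / t) = (b - t) * (t * b - P) / (t * b) := by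
      field_simp; ring
    have h3 : 0 ≤ (b - t) * (t * b - P) / (t * b) :=
      div_nonneg (mul_nonneg (by linarith) (by linarith)) (le_of_lt (mul_pos ht hb))
    linarith

theorem stmt_9 (c₁ c₂ c₃ k x y z : ℝ)
    (hc₁ : 0 < c₁) (hc₂ : 0 < c₂) (hc₃ : 0 < c₃) (hk : 0 < k)
    (hx : 0 < x) (hy : 0 < y) (hz : 0 < z)
    (hxc : x ≤ c₁) (hyc : y ≤ c₂) (hzc : z ≤ c₃)
    (hxyz : x * y * z = k) :
    x + y + z ≤
      max (c₁ + c₂ + k / (c₁ * c₂)) (max (c₁ + c₃ + k / (c₁ * c₃)) (c₂ + c₃ + k / (c₂ * c₃))) := by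
  have hy' : y = (k / z) / x := by
    field_simp
    linarith [hxyz]
  have hPz : 0 < k / z := div_pos hk hz
  have hlow : k / (z * c₂) ≤ x := by
    rw [div_le_iff₀ (mul_pos hz hc₂)]
    nlinarith
  have h1 : x + (k / z) / x ≤ max (k / (z * c₂) + (k / z) / (k / (z * c₂))) (c₁ + (k / z) / c₁) :=
    aux_convex (k / z) _ _ _ hPz (div_pos hk (mul_pos hz hc₂)) hlow hxc
  have he1 : (k / z) / (k / (z * c₂)) = c₂ := by
    field_simp
  rw [he1] at h1
  -- z bounds
  have hzlow : k / (c₁ * c₂) ≤ z := by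
    rw [div_le_iff₀ (mul_pos hc₁ hc₂)]
    nlinarith [mul_le_mul hxc hyc hy.le hc₁.le]
  have hzl0 : 0 < k / (c₁ * c₂) := div_pos hk (mul_pos hc₁ hc₂)
  rcases le_max_iff.mp h1 with h | h
  · -- x + y + z ≤ c₂ + (z + k/(c₂ z))
    have h2 : z + (k / c₂) / z ≤
        max (k / (c₁ * c₂) + (k / c₂) / (k / (c₁ * c₂))) (c₃ + (k / c₂) / c₃) :=
      aux_convex (k / c₂) _ _ _ (div_pos hk hc₂) hzl0 hzlow hzc
    have he2 : (k / c₂) / (k / (c₁ * c₂)) = c₁ := by field_simp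
    rw [he2] at h2
    have heq : (k / c₂) / z = k / (z * c₂) := by rw [div_div]; ring_nf
    rw [heq] at h2
    rcases le_max_iff.mp h2 with h3 | h3
    · refine le_max_of_le_left ?_
      rw [hy']
      have : (k / c₂) / c₃ = k / (c₂ * c₃) := by rw [div_div]
      linarith
    · refine le_max_of_le_right (le_max_of_le_right ?_)
      rw [hy']
      have : (k / c₂) / c₃ = k / (c₂ * c₃) := by rw [div_div]
      linarith
  · -- x + y + z ≤ c₁ + (z + k/(c₁ z))
    have h2 : z + (k / c₁) / z ≤
        max (k / (c₁ * c₂) + (k / c₁) / (k / (c₁ * c₂))) (c₃ + (k / c₁) / c₃) :=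
      aux_convex (k / c₁) _ _ _ (div_pos hk hc₁) hzl0 hzlow hzc
    have he2 : (k / c₁) / (k / (c₁ * c₂)) = c₂ := by field_simp
    rw [he2] at h2
    have heq : (k / c₁) / z = (k / z) / c₁ := by rw [div_div, div_div]; ring_nf
    rw [heq] at h2
    rcases le_max_iff.mp h2 with h3 | h3
    · refine le_max_of_le_left ?_
      rw [hy']
      linarith
    · refine le_max_of_le_right (le_max_of_le_left ?_)
      rw [hy']
      have : (k / c₁) / c₃ = k / (c₁ * c₃) := by rw [div_div]
      linarith
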